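/- Theorem 2 (XLRT achieves bounded regret). Let i ∈ {0,1} be the true demand model and consider a pricing process under model i following the XLRT policy with thresholds η_0, η_1. Set a = (min over k ∈ Fin 3 of I(q i k ‖ q (1−i) k)) − η_i. Then a > 0, and for every horizon T ≥ 1, E[#{t : 1 ≤ t ≤ T, a_t ≠ i}] ≤ 1 + (M − m)²/(2 a²); consequently, for revenues r : Fin 2 → Fin 3 → ℝ with r i i ≥ r i k for all k, the regret Δ_i(T) = T · r i i − E[Σ_{t=1}^T r i (a_t)] is bounded by a constant independent of T. -/

import Mathlib

open MeasureTheory ProbabilityTheory Finset Real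

noncomputable section

/-- Probability of outcome `y ∈ {0,1}` under a Bernoulli distribution with success
probability `p`:  `f p y = p^y (1-p)^(1-y)`. -/
def bern (p : ℝ) (y : ℕ) : ℝ := p ^ y * (1 - p) ^ (1 - y)

/-- The Kullback–Leibler divergence between Bernoulli(α) and Bernoulli(β). -/
def klBern (α β : ℝ) : ℝ :=
  α * Real.log (α / β) + (1 - α) * Real.log ((1 - α) / (1 - β))

variable {Ω : Type*} {mΩ : MeasurableSpace Ω}

/-- The (unnormalized) log-likelihood statistic for the three-price (exploration) setting:
`L t = ∑_{j=1}^t log (f₁^{a_j}(y_j) / f₀^{a_j}(y_j))`, with `L 0 = 0`. -/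
def LLR3 (q : Fin 2 → Fin 3 → ℝ) (a : ℕ → Ω → Fin 3) (y : ℕ → Ω → ℕ) (t : ℕ) (ω : Ω) : ℝ :=
  ∑ j ∈ Finset.Icc 1 t,
    Real.log (bern (q 1 (a j ω)) (y j ω) / bern (q 0 (a j ω)) (y j ω))

/-- A pricing process with three available prices (arms `0`, `1` are the optimal prices of the
two demand models, arm `2` is the exploration price) under true demand model `i`: actions
`a t` are `ℱ (t-1)`-measurable, outcomes `y t ∈ {0,1}` are `ℱ t`-measurable, and the
conditional probability of a successful sale at time `t` given the past is `q i (a t)` a.s. -/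
structure IsPricingProcess3 (μ : Measure Ω) (ℱ : Filtration ℕ mΩ)
    (q : Fin 2 → Fin 3 → ℝ) (i : Fin 2) (a : ℕ → Ω → Fin 3) (y : ℕ → Ω → ℕ) : Prop where
  meas_a : ∀ t, 1 ≤ t → Measurable[ℱ (t - 1)] (a t)
  meas_y : ∀ t, 1 ≤ t → Measurable[ℱ t] (y t)
  y_range : ∀ t, 1 ≤ t → ∀ ω, y t ω = 0 ∨ y t ω = 1
  sale_prob : ∀ t, 1 ≤ t →
    μ[Set.indicator {ω | y t ω = 1} (fun _ => (1 : ℝ)) | ℱ (t - 1)]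
      =ᵐ[μ] fun ω => q i (a t ω)

/-- The XLRT policy with thresholds `η₀, η₁`: for `t ≥ 1`, `a (t+1) = 0` if `L t < -η₀`,
`a (t+1) = 2` (the exploration price) if `-η₀ ≤ L t ≤ η₁`, and `a (t+1) = 1` if `L t > η₁`. -/
def IsXLRT (q : Fin 2 → Fin 3 → ℝ) (a : ℕ → Ω → Fin 3) (y : ℕ → Ω → ℕ) (η₀ η₁ : ℝ) : Prop :=
  ∀ t, 1 ≤ t → ∀ ω,
    a (t + 1) ω =
      if LLR3 q a y t ω < -η₀ then 0 else if LLR3 q a y t ω ≤ η₁ then 2 else 1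

/- ### Auxiliary lemmas -/

lemma hoeffding_aux {p : ℝ} (hp0 : 0 ≤ p) (hp1 : p ≤ 1) (h : ℝ) :
    1 - p + p * exp h ≤ exp (p * h + h ^ 2 / 8) := by
  have hD : ∀ x : ℝ, 0 < 1 - p + p * exp x := by
    intro x
    rcases eq_or_lt_of_le hp0 with h0 | h0
    · simp [← h0]
    · have := exp_pos x; nlinarith
  set F : ℝ → ℝ := fun x => p * x + x ^ 2 / 8 - log (1 - p + p * exp x) with hF
  set g : ℝ → ℝ := fun x => p * exp x / (1 - p + p * exp x) with hg
  have hDd : ∀ x : ℝ, HasDerivAt (fun x => 1 - p + p * exp x) (p * exp x) x := by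
    intro x
    simpa using ((Real.hasDerivAt_exp x).const_mul p).const_add (1 - p)
  have hFd : ∀ x : ℝ, HasDerivAt F (p + x / 4 - g x) x := by
    intro x
    have hlog : HasDerivAt (fun x => log (1 - p + p * exp x)) (g x) x := by
      simpa [hg] using (hDd x).log (hD x).ne'
    have h2 : HasDerivAt (fun x : ℝ => p * x) p x := by
      simpa using (hasDerivAt_id x).const_mul p
    have h1 : HasDerivAt (fun x : ℝ => p * x + x ^ 2 / 8) (p + x / 4) x := by
      have := h2.add ((hasDerivAt_pow 2 x).div_const 8)
      convert this using 1
      all_goals first | rfl | (push_cast; ring)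
    exact h1.sub hlog
  -- bounds on g
  have hg01 : ∀ x : ℝ, g x ∈ Set.Icc (0:ℝ) 1 := by
    intro x
    have hx := hD x
    constructor
    · exact div_nonneg (by positivity) hx.le
    · rw [div_le_one hx]
      nlinarith [exp_pos x]
  -- derivative of g
  have hgd : ∀ x : ℝ, HasDerivAt g (g x * (1 - g x)) x := by
    intro x
    have hnum : HasDerivAt (fun x => p * exp x) (p * exp x) x :=
      (Real.hasDerivAt_exp x).const_mul p
    have := hnum.div (hDd x) (hD x).ne'
    convert this using 1
    all_goals first | rfl | skip
    have hx := (hD x).ne'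
    simp only [hg]
    rw [eq_div_iff (pow_ne_zero 2 hx)]
    field_simp
  -- g is (1/4)-Lipschitz
  have hgL : ∀ x : ℝ, |g x - p| ≤ |x| / 4 := by
    intro x
    have hb : ∀ z ∈ Set.univ, ‖deriv g z‖ ≤ (1/4 : ℝ) := by
      intro z _
      rw [(hgd z).deriv, Real.norm_eq_abs]
      have := hg01 z
      rw [abs_of_nonneg (by nlinarith [this.1, this.2])]
      nlinarith [this.1, this.2, sq_nonneg (2 * g z - 1)]
    have := Convex.norm_image_sub_le_of_norm_deriv_le
      (f := g) (s := Set.univ) (fun z _ => (hgd z).differentiableAt)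
      hb convex_univ (Set.mem_univ 0) (Set.mem_univ x)
    have hg0 : g 0 = p := by
      simp [hg]
    rw [hg0, sub_zero, Real.norm_eq_abs, Real.norm_eq_abs] at this
    linarith
  -- F is nonneg
  have hF0 : F 0 = 0 := by simp [hF]
  have hFnn : ∀ x : ℝ, 0 ≤ F x := by
    intro x
    rcases le_total 0 x with hx | hx
    · have hmono : MonotoneOn F (Set.Ici 0) := by
        apply monotoneOn_of_deriv_nonneg (convex_Ici 0)
          (fun z _ => (hFd z).continuousAt.continuousWithinAt)
          (fun z _ => (hFd z).differentiableAt.differentiableWithinAt)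
        intro z hz
        rw [interior_Ici] at hz
        rw [(hFd z).deriv]
        have := hgL z
        rw [abs_of_nonneg (le_of_lt (Set.mem_Ioi.mp hz))] at this
        have := abs_le.mp this
        linarith [this.1, this.2]
      have := hmono (Set.mem_Ici.mpr le_rfl) (Set.mem_Ici.mpr hx) hx
      linarith [hF0 ▸ this]
    · have hanti : AntitoneOn F (Set.Iic 0) := by
        apply antitoneOn_of_deriv_nonpos (convex_Iic 0)
          (fun z _ => (hFd z).continuousAt.continuousWithinAt)
          (fun z _ => (hFd z).differentiableAt.differentiableWithinAt)
        intro z hz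
        rw [interior_Iic] at hz
        rw [(hFd z).deriv]
        have := hgL z
        rw [abs_of_nonpos (le_of_lt (Set.mem_Iio.mp hz))] at this
        have := abs_le.mp this
        linarith [this.1, this.2]
      have := hanti (Set.mem_Iic.mpr hx) (Set.mem_Iic.mpr le_rfl) hx
      linarith [hF0 ▸ this]
  have := hFnn h
  have hlog : log (1 - p + p * exp h) ≤ p * h + h ^ 2 / 8 := by
    simp only [hF] at this; linarith
  calc 1 - p + p * exp h = exp (log (1 - p + p * exp h)) := (exp_log (hD h)).symm
    _ ≤ exp (p * h + h ^ 2 / 8) := exp_le_exp.mpr hlog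

lemma two_point_mgf' {p x0 x1 s α β : ℝ} (hp0 : 0 ≤ p) (hp1 : p ≤ 1)
    (h0 : x0 ∈ Set.Icc α β) (h1 : x1 ∈ Set.Icc α β) :
    p * exp (s * (x1 - (p * x1 + (1 - p) * x0))) +
      (1 - p) * exp (s * (x0 - (p * x1 + (1 - p) * x0))) ≤
      exp (s ^ 2 * (β - α) ^ 2 / 8) := by
  set h := s * (x1 - x0) with hh
  have e1 : s * (x1 - (p * x1 + (1 - p) * x0)) = h + -(p * h) := by rw [hh]; ring
  have e2 : s * (x0 - (p * x1 + (1 - p) * x0)) = -(p * h) := by rw [hh]; ring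
  have key := hoeffding_aux hp0 hp1 h
  have hLHS : p * exp (h + -(p*h)) + (1 - p) * exp (-(p*h))
      = exp (-(p*h)) * (1 - p + p * exp h) := by
    rw [exp_add]; ring
  rw [e1, e2, hLHS]
  have step : exp (-(p*h)) * (1 - p + p * exp h) ≤ exp (-(p*h)) * exp (p*h + h^2/8) :=
    mul_le_mul_of_nonneg_left key (exp_pos _).le
  refine step.trans ?_
  rw [← exp_add]
  apply exp_le_exp.mpr
  have hsq : h ^ 2 ≤ s ^ 2 * (β - α) ^ 2 := by
    have h2 : (x1 - x0) ^ 2 ≤ (β - α) ^ 2 := by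
      apply sq_le_sq'
      · linarith [h0.1, h0.2, h1.1, h1.2]
      · linarith [h0.1, h0.2, h1.1, h1.2]
    calc h ^ 2 = s ^ 2 * (x1 - x0) ^ 2 := by rw [hh, mul_pow]
      _ ≤ s ^ 2 * (β - α) ^ 2 := mul_le_mul_of_nonneg_left h2 (sq_nonneg s)
  linarith

lemma integrable_of_bdd {μ : Measure Ω} [IsFiniteMeasure μ] {f : Ω → ℝ} {C : ℝ}
    (hf : AEStronglyMeasurable f μ) (h : ∀ ω, |f ω| ≤ C) : Integrable f μ :=
  Integrable.mono' (integrable_const C) hf (ae_of_all _ fun ω => by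
    simpa [Real.norm_eq_abs] using h ω)

lemma meas_comp3 {m' : MeasurableSpace Ω} {A : Ω → Fin 3} {Y : Ω → ℕ}
    (hA : Measurable[m'] A) (hY : Measurable[m'] Y) (F : Fin 3 → ℕ → ℝ) :
    Measurable[m'] fun ω => F (A ω) (Y ω) :=
  (measurable_of_countable (Function.uncurry F)).comp (hA.prodMk hY)

lemma geom_Icc_le {r : ℝ} (h0 : 0 ≤ r) (h1 : r < 1) (N : ℕ) :
    ∑ s ∈ Finset.Icc 1 N, r ^ s ≤ r / (1 - r) := by
  have hr : (0:ℝ) < 1 - r := by linarith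
  have key : ∀ N : ℕ, ∑ s ∈ Finset.Icc 1 N, r ^ s = (r - r ^ (N + 1)) / (1 - r) := by
    intro N
    induction N with
    | zero => simp
    | succ n ih =>
      rw [Finset.sum_Icc_succ_top (by omega : 1 ≤ n + 1), ih]
      field_simp
      ring
  rw [key N]
  have : (0:ℝ) ≤ r ^ (N + 1) := by positivity
  rw [div_le_div_iff₀ hr hr]
  nlinarith

lemma mgf_bound (μ : Measure Ω) [IsProbabilityMeasure μ] (ℱ : Filtration ℕ mΩ)
    (A : ℕ → Ω → Fin 3) (Y : ℕ → Ω → ℕ)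
    (hA : ∀ t, 1 ≤ t → Measurable[ℱ (t - 1)] (A t))
    (hY : ∀ t, 1 ≤ t → Measurable[ℱ t] (Y t))
    (hYr : ∀ t, 1 ≤ t → ∀ ω, Y t ω = 0 ∨ Y t ω = 1)
    (p : Fin 3 → ℝ) (hp : ∀ k, p k ∈ Set.Icc (0:ℝ) 1)
    (hsale : ∀ t, 1 ≤ t →
      μ[Set.indicator {ω | Y t ω = 1} (fun _ => (1:ℝ)) | ℱ (t - 1)]
        =ᵐ[μ] fun ω => p (A t ω))
    (u : Fin 3 → ℕ → ℝ) (α β s : ℝ)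
    (hu : ∀ k, u k 0 ∈ Set.Icc α β ∧ u k 1 ∈ Set.Icc α β)
    (C : Fin 3 → ℝ) (hC : ∀ k, C k = p k * u k 1 + (1 - p k) * u k 0) :
    ∀ t, (∫ ω, exp (s * ∑ j ∈ Finset.Icc 1 t, (C (A j ω) - u (A j ω) (Y j ω))) ∂μ)
      ≤ exp (s ^ 2 * (β - α) ^ 2 / 8) ^ t := by
  -- basic bounds
  have hαβ : α ≤ β := (hu 0).1.1.trans (hu 0).1.2
  set K := exp (s ^ 2 * (β - α) ^ 2 / 8) with hK
  set D : ℕ → Ω → ℝ := fun j ω => C (A j ω) - u (A j ω) (Y j ω) with hD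
  set Z : ℕ → Ω → ℝ := fun t ω => ∑ j ∈ Finset.Icc 1 t, D j ω with hZ
  have hCmem : ∀ k, C k ∈ Set.Icc α β := by
    intro k
    have h1 := (hu k).1; have h2 := (hu k).2; have h3 := hp k
    rw [hC k]
    constructor
    · nlinarith [h1.1, h2.1, h3.1, h3.2]
    · nlinarith [h1.2, h2.2, h3.1, h3.2]
  have humem : ∀ j, 1 ≤ j → ∀ ω, u (A j ω) (Y j ω) ∈ Set.Icc α β := by
    intro j hj ω
    rcases hYr j hj ω with h | h <;> rw [h]
    · exact (hu _).1
    · exact (hu _).2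
  have hDbdd : ∀ j, 1 ≤ j → ∀ ω, |D j ω| ≤ β - α := by
    intro j hj ω
    have h1 := hCmem (A j ω); have h2 := humem j hj ω
    simp only [hD]
    rw [abs_le]; constructor <;> [linarith [h1.1, h2.2]; linarith [h1.2, h2.1]]
  -- measurability of pieces
  have hAm : ∀ j, 1 ≤ j → ∀ t, j - 1 ≤ t → Measurable[ℱ t] (A j) :=
    fun j hj t ht => (hA j hj).mono (ℱ.mono ht) le_rfl
  have hYm : ∀ j, 1 ≤ j → ∀ t, j ≤ t → Measurable[ℱ t] (Y j) :=
    fun j hj t ht => (hY j hj).mono (ℱ.mono ht) le_rfl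
  have hZm : ∀ t, Measurable[ℱ t] (Z t) := by
    intro t
    apply Finset.measurable_sum
    intro j hj
    rw [Finset.mem_Icc] at hj
    exact meas_comp3 (hAm j hj.1 t (by omega)) (hYm j hj.1 t hj.2)
      (fun k n => C k - u k n)
  have hZbdd : ∀ t ω, |Z t ω| ≤ t * (β - α) := by
    intro t ω
    calc |Z t ω| ≤ ∑ j ∈ Finset.Icc 1 t, |D j ω| := Finset.abs_sum_le_sum_abs _ _
      _ ≤ ∑ j ∈ Finset.Icc 1 t, (β - α) := by
          apply Finset.sum_le_sum
          intro j hj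
          rw [Finset.mem_Icc] at hj
          exact hDbdd j hj.1 ω
      _ = t * (β - α) := by rw [Finset.sum_const, Nat.card_Icc]; simp [mul_comm]
  have hexpZbdd : ∀ t ω, |exp (s * Z t ω)| ≤ exp (|s| * (t * (β - α))) := by
    intro t ω
    rw [abs_of_pos (exp_pos _), exp_le_exp]
    calc s * Z t ω ≤ |s * Z t ω| := le_abs_self _
      _ = |s| * |Z t ω| := abs_mul _ _
      _ ≤ |s| * (t * (β - α)) := by
          apply mul_le_mul_of_nonneg_left (hZbdd t ω) (abs_nonneg s)
  have hexpZ_int : ∀ t, Integrable (fun ω => exp (s * Z t ω)) μ := by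
    intro t
    exact integrable_of_bdd (((hZm t).mono (ℱ.le t) le_rfl).const_mul s).exp.aestronglyMeasurable
      (hexpZbdd t)
  -- induction
  intro t
  induction t with
  | zero => simp [hZ, hD]
  | succ t ih =>
    have ht1 : 1 ≤ t + 1 := by omega
    have htm : t + 1 - 1 = t := by omega
    have hAt : Measurable[ℱ t] (A (t + 1)) := by
      have := hA (t + 1) ht1; rwa [htm] at this
    set f : Ω → ℝ := fun ω => exp (s * Z t ω) with hf
    set g : Ω → ℝ := fun ω => exp (s * D (t + 1) ω) with hg
    have hsplit : ∀ ω, exp (s * Z (t + 1) ω) = f ω * g ω := by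
      intro ω
      rw [hf, hg, ← exp_add]
      congr 1
      simp only [hZ]
      rw [Finset.sum_Icc_succ_top ht1]
      ring
    set G : ℕ → Ω → ℝ := fun n ω => exp (s * (C (A (t + 1) ω) - u (A (t + 1) ω) n)) with hG
    have hGm : ∀ n, Measurable[ℱ t] (G n) := fun n =>
      (measurable_of_countable (fun k => exp (s * (C k - u k n)))).comp hAt
    have hGbdd : ∀ n, n = 0 ∨ n = 1 → ∀ ω, |G n ω| ≤ exp (|s| * (β - α)) := by
      intro n hn ω
      have h1 := hCmem (A (t + 1) ω)
      have h2 : u (A (t + 1) ω) n ∈ Set.Icc α β := by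
        rcases hn with h | h <;> rw [h]
        exacts [(hu _).1, (hu _).2]
      simp only [hG]
      rw [abs_of_pos (exp_pos _), exp_le_exp]
      calc s * (C (A (t+1) ω) - u (A (t+1) ω) n) ≤ |s * (C (A (t+1) ω) - u (A (t+1) ω) n)| :=
            le_abs_self _
        _ = |s| * |C (A (t+1) ω) - u (A (t+1) ω) n| := abs_mul _ _
        _ ≤ |s| * (β - α) := by
            apply mul_le_mul_of_nonneg_left _ (abs_nonneg s)
            rw [abs_le]
            constructor <;> [linarith [h1.1, h2.2]; linarith [h1.2, h2.1]]
    set ind : Ω → ℝ := Set.indicator {ω | Y (t + 1) ω = 1} (fun _ => (1:ℝ)) with hind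
    have hindm : Measurable ind := by
      apply Measurable.indicator measurable_const
      exact ((hY (t + 1) ht1).mono (ℱ.le _) le_rfl) (measurableSet_singleton 1)
    have hind_bdd : ∀ ω, |ind ω| ≤ 1 := by
      intro ω
      simp only [hind, Set.indicator]
      split <;> simp
    have hind_int : Integrable ind μ := integrable_of_bdd hindm.aestronglyMeasurable hind_bdd
    have hdecomp : ∀ ω, g ω = G 0 ω + (G 1 ω - G 0 ω) * ind ω := by
      intro ω
      rcases hYr (t + 1) ht1 ω with h | h
      · have : ind ω = 0 := by
          simp only [hind]
          apply Set.indicator_of_notMem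
          simp [h]
        rw [this, mul_zero, add_zero]
        simp only [hg, hG, hD, h]
      · have : ind ω = 1 := by
          simp only [hind]
          apply Set.indicator_of_mem
          simp [h]
        rw [this, mul_one]
        simp only [hg, hG, hD, h]
        ring
    have hG_int : ∀ n, n = 0 ∨ n = 1 → Integrable (G n) μ := fun n hn =>
      integrable_of_bdd (((hGm n).mono (ℱ.le t) le_rfl).aestronglyMeasurable) (hGbdd n hn)
    have hGdiff_int : Integrable (fun ω => (G 1 ω - G 0 ω) * ind ω) μ := by
      apply integrable_of_bdd (C := 2 * exp (|s| * (β - α)))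
      · exact ((((hGm 1).mono (ℱ.le t) le_rfl).sub
          ((hGm 0).mono (ℱ.le t) le_rfl)).mul hindm).aestronglyMeasurable
      · intro ω
        calc |(G 1 ω - G 0 ω) * ind ω| = |G 1 ω - G 0 ω| * |ind ω| := abs_mul _ _
          _ ≤ (|G 1 ω| + |G 0 ω|) * 1 := by
              apply mul_le_mul (abs_sub _ _) (hind_bdd ω) (abs_nonneg _)
              positivity
          _ ≤ 2 * exp (|s| * (β - α)) := by
              have := hGbdd 1 (Or.inr rfl) ω; have := hGbdd 0 (Or.inl rfl) ω
              linarith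
    -- conditional expectation of g
    have hsale' : μ[ind | ℱ t] =ᵐ[μ] fun ω => p (A (t + 1) ω) := by
      have := hsale (t + 1) ht1
      rwa [htm] at this
    have hcondg : μ[g | ℱ t] ≤ᵐ[μ] fun _ => K := by
      have h1 : μ[g | ℱ t] =ᵐ[μ] μ[(fun ω => G 0 ω + (G 1 ω - G 0 ω) * ind ω) | ℱ t] :=
        condExp_congr_ae (ae_of_all _ hdecomp)
      have h2 : μ[(fun ω => G 0 ω + (G 1 ω - G 0 ω) * ind ω) | ℱ t]
          =ᵐ[μ] μ[G 0 | ℱ t] + μ[(fun ω => (G 1 ω - G 0 ω) * ind ω) | ℱ t] :=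
        condExp_add (hG_int 0 (Or.inl rfl)) hGdiff_int _
      have h3 : μ[G 0 | ℱ t] = G 0 :=
        condExp_of_stronglyMeasurable (ℱ.le t) ((hGm 0).stronglyMeasurable)
          (hG_int 0 (Or.inl rfl))
      have h4 : μ[(fun ω => (G 1 ω - G 0 ω) * ind ω) | ℱ t]
          =ᵐ[μ] fun ω => (G 1 ω - G 0 ω) * (μ[ind | ℱ t]) ω := by
        have := condExp_stronglyMeasurable_mul_of_bound (ℱ.le t)
          (((hGm 1).sub (hGm 0)).stronglyMeasurable) hind_int (2 * exp (|s| * (β - α)))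
          (ae_of_all _ (fun ω => by
            rw [Real.norm_eq_abs]
            calc |G 1 ω - G 0 ω| ≤ |G 1 ω| + |G 0 ω| := abs_sub _ _
              _ ≤ 2 * exp (|s| * (β - α)) := by
                  have := hGbdd 1 (Or.inr rfl) ω; have := hGbdd 0 (Or.inl rfl) ω
                  linarith))
        exact this
      have h5 : (fun ω => (G 1 ω - G 0 ω) * (μ[ind | ℱ t]) ω)
          =ᵐ[μ] fun ω => (G 1 ω - G 0 ω) * p (A (t + 1) ω) := by
        filter_upwards [hsale'] with ω hω
        rw [hω]
      have key : μ[g | ℱ t] =ᵐ[μ] fun ω => G 0 ω + (G 1 ω - G 0 ω) * p (A (t + 1) ω) := by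
        refine (h1.trans (h2.trans ?_))
        calc μ[G 0 | ℱ t] + μ[(fun ω => (G 1 ω - G 0 ω) * ind ω) | ℱ t]
            =ᵐ[μ] G 0 + fun ω => (G 1 ω - G 0 ω) * p (A (t + 1) ω) := by
              rw [h3]
              exact Filter.EventuallyEq.add (Filter.EventuallyEq.refl _ _) (h4.trans h5)
          _ =ᵐ[μ] fun ω => G 0 ω + (G 1 ω - G 0 ω) * p (A (t + 1) ω) := by rfl
      refine key.le.trans (ae_of_all _ ?_)
      intro ω
      set k := A (t + 1) ω with hk
      have hpk := hp k
      have hx0 : -u k 0 ∈ Set.Icc (-β) (-α) := by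
        have := (hu k).1; exact ⟨neg_le_neg this.2, neg_le_neg this.1⟩
      have hx1 : -u k 1 ∈ Set.Icc (-β) (-α) := by
        have := (hu k).2; exact ⟨neg_le_neg this.2, neg_le_neg this.1⟩
      have htp := two_point_mgf' (s := s) hpk.1 hpk.2 hx0 hx1
      have e1 : s * (-u k 1 - (p k * -u k 1 + (1 - p k) * -u k 0)) = s * (C k - u k 1) := by
        rw [hC]; ring
      have e0 : s * (-u k 0 - (p k * -u k 1 + (1 - p k) * -u k 0)) = s * (C k - u k 0) := by
        rw [hC]; ring
      have e2 : s ^ 2 * (-α - -β) ^ 2 / 8 = s ^ 2 * (β - α) ^ 2 / 8 := by ring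
      rw [e1, e0, e2] at htp
      simp only [hG, hK]
      nlinarith [htp]
    -- putting it together
    have ih' : (∫ ω, f ω ∂μ) ≤ K ^ t := ih
    show (∫ ω, exp (s * Z (t + 1) ω) ∂μ) ≤ K ^ (t + 1)
    have intfg : Integrable (fun ω => f ω * g ω) μ :=
      (hexpZ_int (t + 1)).congr (ae_of_all _ hsplit)
    have e1 : (∫ ω, exp (s * Z (t + 1) ω) ∂μ) = ∫ ω, f ω * g ω ∂μ :=
      integral_congr_ae (ae_of_all _ hsplit)
    have e2 : (∫ ω, f ω * g ω ∂μ) = ∫ ω, (μ[(fun ω => f ω * g ω) | ℱ t]) ω ∂μ :=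
      (integral_condExp (ℱ.le t) (f := fun ω => f ω * g ω)).symm
    have hg_int : Integrable g μ := by
      refine integrable_of_bdd
          ((meas_comp3 ((hA (t+1) ht1).mono (ℱ.le _) le_rfl)
            ((hY (t+1) ht1).mono (ℱ.le _) le_rfl)
            (fun k n => exp (s * (C k - u k n)))).aestronglyMeasurable)
          (C := exp (|s| * (β - α))) (fun ω => ?_)
      rw [abs_of_pos (exp_pos _), exp_le_exp]
      calc s * D (t+1) ω ≤ |s * D (t+1) ω| := le_abs_self _
        _ = |s| * |D (t+1) ω| := abs_mul _ _
        _ ≤ |s| * (β - α) :=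
            mul_le_mul_of_nonneg_left (hDbdd (t+1) ht1 ω) (abs_nonneg s)
    have e3 : μ[(fun ω => f ω * g ω) | ℱ t] =ᵐ[μ] fun ω => f ω * (μ[g | ℱ t]) ω := by
      exact condExp_stronglyMeasurable_mul_of_bound (ℱ.le t)
        (((hZm t).const_mul s).exp.stronglyMeasurable) hg_int
        (exp (|s| * (t * (β - α))))
        (ae_of_all _ (fun ω => by rw [Real.norm_eq_abs]; exact hexpZbdd t ω))
    have e4 : (∫ ω, (μ[(fun ω => f ω * g ω) | ℱ t]) ω ∂μ)
        = ∫ ω, f ω * (μ[g | ℱ t]) ω ∂μ := integral_congr_ae e3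
    have e5 : (∫ ω, f ω * (μ[g | ℱ t]) ω ∂μ) ≤ ∫ ω, f ω * K ∂μ := by
      apply integral_mono_ae
      · exact (integrable_condExp).congr e3
      · exact (hexpZ_int t).mul_const K
      · filter_upwards [hcondg] with ω hω
        exact mul_le_mul_of_nonneg_left hω (exp_pos _).le
    have e6 : (∫ ω, f ω * K ∂μ) = (∫ ω, f ω ∂μ) * K := integral_mul_const K f
    rw [e1, e2, e4]
    refine e5.trans ?_
    rw [e6, pow_succ]
    exact mul_le_mul_of_nonneg_right ih' (exp_pos _).le

/-- **Theorem 2 (XLRT achieves bounded regret).** If the true demand model is `i` and the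
thresholds satisfy `η₁ < min_k I(q 1 k ‖ q 0 k)`, `η₀ < min_k I(q 0 k ‖ q 1 k)`, then
`a = min_k I(q i k ‖ q (1-i) k) − ηᵢ > 0`, the expected number of times `t ∈ {1,…,T}` at
which the XLRT policy does not select arm `i` is at most `1 + (M−m)²/(2a²)` uniformly in the
horizon `T`, and consequently the regret is bounded by a constant independent of `T`. -/
theorem xlrt_bounded_regret
    (μ : Measure Ω) [IsProbabilityMeasure μ] (ℱ : Filtration ℕ mΩ)
    (q : Fin 2 → Fin 3 → ℝ)
    (hq : ∀ i k, q i k ∈ Set.Ioo (0 : ℝ) 1)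
    (hni : ∀ k, q 0 k ≠ q 1 k)
    (i : Fin 2) (a : ℕ → Ω → Fin 3) (y : ℕ → Ω → ℕ)
    (η₀ η₁ : ℝ) (hη₀0 : 0 ≤ η₀) (hη₁0 : 0 ≤ η₁)
    (hη₁ : η₁ < Finset.univ.inf' ⟨0, Finset.mem_univ 0⟩
      (fun k : Fin 3 => klBern (q 1 k) (q 0 k)))
    (hη₀ : η₀ < Finset.univ.inf' ⟨0, Finset.mem_univ 0⟩
      (fun k : Fin 3 => klBern (q 0 k) (q 1 k)))
    (hproc : IsPricingProcess3 μ ℱ q i a y)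
    (hpol : IsXLRT q a y η₀ η₁)
    (r : Fin 2 → Fin 3 → ℝ)
    (hr : ∀ k, r i k ≤ r i i.castSucc)
    (aa m M : ℝ)
    (haa : aa = Finset.univ.inf' ⟨0, Finset.mem_univ 0⟩
        (fun k : Fin 3 => klBern (q i k) (q (1 - i) k)) - (if i = 0 then η₀ else η₁))
    (hm : m = Finset.univ.inf' ⟨(0, 0), Finset.mem_univ _⟩
      (fun p : Fin 3 × Fin 2 =>
        Real.log (bern (q 1 p.1) (p.2 : ℕ) / bern (q 0 p.1) (p.2 : ℕ))))
    (hM : M = Finset.univ.sup' ⟨(0, 0), Finset.mem_univ _⟩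
      (fun p : Fin 3 × Fin 2 =>
        Real.log (bern (q 1 p.1) (p.2 : ℕ) / bern (q 0 p.1) (p.2 : ℕ)))) :
    0 < aa ∧
      (∀ T : ℕ, 1 ≤ T →
        (∫ ω, (((Finset.Icc 1 T).filter (fun t => a t ω ≠ i.castSucc)).card : ℝ) ∂μ)
          ≤ 1 + (M - m) ^ 2 / (2 * aa ^ 2)) ∧
      ∃ B : ℝ, ∀ T : ℕ, 1 ≤ T →
        (T : ℝ) * r i i.castSucc - ∫ ω, ∑ t ∈ Finset.Icc 1 T, r i (a t ω) ∂μ ≤ B := by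
  classical
  have hi2 : ∀ j : Fin 2, j = 0 ∨ j = 1 := by decide
  -- abbreviations
  set ℓv : Fin 3 → ℕ → ℝ := fun k n => Real.log (bern (q 1 k) n / bern (q 0 k) n) with hℓv
  set κ : ℝ := Finset.univ.inf' ⟨0, Finset.mem_univ 0⟩
      (fun k : Fin 3 => klBern (q i k) (q (1 - i) k)) with hκ
  set η : ℝ := if i = 0 then η₀ else η₁ with hη
  set ε : ℝ := if i = 0 then (-1 : ℝ) else 1 with hεdef
  set klB : Fin 3 → ℝ := fun k => klBern (q i k) (q (1 - i) k) with hklB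
  -- basic positivity facts about q
  have hq0 : ∀ j k, 0 < q j k := fun j k => (hq j k).1
  have hq1 : ∀ j k, q j k < 1 := fun j k => (hq j k).2
  have hq1' : ∀ j k, 0 < 1 - q j k := fun j k => by linarith [hq1 j k]
  -- bern facts
  have hbern1 : ∀ p : ℝ, bern p 1 = p := fun p => by simp [bern]
  have hbern0 : ∀ p : ℝ, bern p 0 = 1 - p := fun p => by simp [bern]
  have hℓv1 : ∀ k, ℓv k 1 = Real.log (q 1 k) - Real.log (q 0 k) := by
    intro k
    rw [hℓv]
    simp only
    rw [hbern1, hbern1, Real.log_div (hq0 1 k).ne' (hq0 0 k).ne']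
  have hℓv0 : ∀ k, ℓv k 0 = Real.log (1 - q 1 k) - Real.log (1 - q 0 k) := by
    intro k
    rw [hℓv]
    simp only
    rw [hbern0, hbern0, Real.log_div (hq1' 1 k).ne' (hq1' 0 k).ne']
  -- threshold facts
  have hηexpr : η < κ := by
    rcases hi2 i with h | h <;> subst h
    · rw [hη, hκ, if_pos rfl]
      exact hη₀
    · rw [hη, hκ, if_neg (by decide)]
      exact hη₁
  have hηnn : 0 ≤ η := by
    rw [hη]; split <;> assumption
  have haa' : aa = κ - η := haa
  have haapos : 0 < aa := by rw [haa']; linarith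
  -- the KL identity
  have hkl : ∀ k, klB k = q i k * (ε * ℓv k 1) + (1 - q i k) * (ε * ℓv k 0) := by
    intro k
    rw [hklB]
    simp only
    rw [hℓv1 k, hℓv0 k]
    rcases hi2 i with h | h <;> subst h
    · rw [hεdef, if_pos rfl]
      show klBern (q 0 k) (q ((1 : Fin 2) - 0) k) = _
      have h10 : ((1 : Fin 2) - 0) = 1 := by decide
      rw [h10, klBern,
        Real.log_div (hq0 0 k).ne' (hq0 1 k).ne',
        Real.log_div (hq1' 0 k).ne' (hq1' 1 k).ne']
      ring
    · rw [hεdef, if_neg (by decide)]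
      show klBern (q 1 k) (q ((1 : Fin 2) - 1) k) = _
      have h10 : ((1 : Fin 2) - 1) = 0 := by decide
      rw [h10, klBern,
        Real.log_div (hq0 1 k).ne' (hq0 0 k).ne',
        Real.log_div (hq1' 1 k).ne' (hq1' 0 k).ne']
      ring
  -- bounds m ≤ ℓv ≤ M
  have hm0 : ∀ k, m ≤ ℓv k 0 := by
    intro k
    rw [hm]
    exact Finset.inf'_le (fun p : Fin 3 × Fin 2 =>
      Real.log (bern (q 1 p.1) (p.2 : ℕ) / bern (q 0 p.1) (p.2 : ℕ)))
      (Finset.mem_univ ((k, 0) : Fin 3 × Fin 2))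
  have hm1 : ∀ k, m ≤ ℓv k 1 := by
    intro k
    rw [hm]
    exact Finset.inf'_le (fun p : Fin 3 × Fin 2 =>
      Real.log (bern (q 1 p.1) (p.2 : ℕ) / bern (q 0 p.1) (p.2 : ℕ)))
      (Finset.mem_univ ((k, 1) : Fin 3 × Fin 2))
  have hM0 : ∀ k, ℓv k 0 ≤ M := by
    intro k
    rw [hM]
    exact Finset.le_sup' (fun p : Fin 3 × Fin 2 =>
      Real.log (bern (q 1 p.1) (p.2 : ℕ) / bern (q 0 p.1) (p.2 : ℕ)))
      (Finset.mem_univ ((k, 0) : Fin 3 × Fin 2))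
  have hM1 : ∀ k, ℓv k 1 ≤ M := by
    intro k
    rw [hM]
    exact Finset.le_sup' (fun p : Fin 3 × Fin 2 =>
      Real.log (bern (q 1 p.1) (p.2 : ℕ) / bern (q 0 p.1) (p.2 : ℕ)))
      (Finset.mem_univ ((k, 1) : Fin 3 × Fin 2))
  -- m < M
  have hne : ℓv 0 0 ≠ ℓv 0 1 := by
    rcases lt_or_gt_of_ne (hni 0) with h | h
    · have h1 : 0 < ℓv 0 1 := by
        rw [hℓv1]
        have : Real.log (q 0 0) < Real.log (q 1 0) :=
          Real.log_lt_log (hq0 0 0) h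
        linarith
      have h0 : ℓv 0 0 < 0 := by
        rw [hℓv0]
        have : Real.log (1 - q 1 0) < Real.log (1 - q 0 0) :=
          Real.log_lt_log (hq1' 1 0) (by linarith)
        linarith
      linarith
    · have h1 : ℓv 0 1 < 0 := by
        rw [hℓv1]
        have : Real.log (q 1 0) < Real.log (q 0 0) :=
          Real.log_lt_log (hq0 1 0) h
        linarith
      have h0 : 0 < ℓv 0 0 := by
        rw [hℓv0]
        have : Real.log (1 - q 0 0) < Real.log (1 - q 1 0) :=
          Real.log_lt_log (hq1' 0 0) (by linarith)
        linarith
      linarith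
  have hmM : m < M := by
    rcases lt_or_ge m M with h | h
    · exact h
    · exact absurd (le_antisymm ((hM0 0).trans (h.trans (hm1 0)))
        ((hM1 0).trans (h.trans (hm0 0)))) hne
  have hL : (0:ℝ) < M - m := by linarith
  have hLne : (M - m) ≠ 0 := hL.ne'
  -- parameters
  set lam : ℝ := 4 * aa / (M - m) ^ 2 with hlam
  have hlampos : 0 < lam := by
    rw [hlam]; positivity
  set cc : ℝ := 2 * aa ^ 2 / (M - m) ^ 2 with hcc
  have hccpos : 0 < cc := by rw [hcc]; positivity
  set rr : ℝ := exp (-cc) with hrr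
  have hrr0 : 0 < rr := exp_pos _
  have hrr1 : rr < 1 := by
    rw [hrr, exp_lt_one_iff]
    linarith
  clear_value lam cc rr
  -- the compensated walk
  set W : ℕ → Ω → ℝ := fun t ω =>
    ∑ j ∈ Finset.Icc 1 t, (klB (a j ω) - ε * ℓv (a j ω) (y j ω)) with hW
  have hεcases : ε = -1 ∨ ε = 1 := by
    rw [hεdef]; split
    · exact Or.inl rfl
    · exact Or.inr rfl
  have hqIcc : ∀ k, q i k ∈ Set.Icc (0:ℝ) 1 :=
    fun k => ⟨(hq0 i k).le, (hq1 i k).le⟩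
  -- MGF bound
  have hmgf : ∀ t, (∫ ω, exp (lam * W t ω) ∂μ) ≤ exp (lam ^ 2 * (M - m) ^ 2 / 8) ^ t := by
    rcases hεcases with h | h
    · -- ε = -1 : u k n = -ℓv k n ∈ [-M, -m]
      have := mgf_bound μ ℱ a y hproc.meas_a hproc.meas_y hproc.y_range
        (q i) hqIcc hproc.sale_prob (fun k n => ε * ℓv k n) (-M) (-m) lam
        (fun k => by
          rw [h]
          constructor
          · exact ⟨by simpa using hM0 k, by simpa using hm0 k⟩
          · exact ⟨by simpa using hM1 k, by simpa using hm1 k⟩)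
        klB hkl
      have e : (-m - -M : ℝ) ^ 2 = (M - m) ^ 2 := by ring
      rw [e] at this
      exact this
    · -- ε = 1 : u k n = ℓv k n ∈ [m, M]
      have := mgf_bound μ ℱ a y hproc.meas_a hproc.meas_y hproc.y_range
        (q i) hqIcc hproc.sale_prob (fun k n => ε * ℓv k n) m M lam
        (fun k => by
          rw [h]
          constructor
          · exact ⟨by simpa using hm0 k, by simpa using hM0 k⟩
          · exact ⟨by simpa using hm1 k, by simpa using hM1 k⟩)
        klB hkl
      exact this
  -- measurability / integrability of the walk
  have ham : ∀ t, 1 ≤ t → Measurable (a t) :=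
    fun t ht => (hproc.meas_a t ht).mono (ℱ.le _) le_rfl
  have hym : ∀ t, 1 ≤ t → Measurable (y t) :=
    fun t ht => (hproc.meas_y t ht).mono (ℱ.le _) le_rfl
  have hWm : ∀ t, Measurable (W t) := by
    intro t
    apply Finset.measurable_sum
    intro j hj
    rw [Finset.mem_Icc] at hj
    exact meas_comp3 (ham j hj.1) (hym j hj.1) (fun k n => klB k - ε * ℓv k n)
  set CB : ℝ := (Finset.univ.sup' ⟨0, Finset.mem_univ 0⟩ fun k => |klB k|)
      + (|m| + |M|) * (1 + 1) with hCB
  have hWbdd : ∀ t ω, |W t ω| ≤ t * CB := by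
    intro t ω
    calc |W t ω| ≤ ∑ j ∈ Finset.Icc 1 t, |klB (a j ω) - ε * ℓv (a j ω) (y j ω)| :=
          Finset.abs_sum_le_sum_abs _ _
      _ ≤ ∑ j ∈ Finset.Icc 1 t, CB := by
          apply Finset.sum_le_sum
          intro j hj
          rw [Finset.mem_Icc] at hj
          have h1 : |klB (a j ω)| ≤ Finset.univ.sup' ⟨0, Finset.mem_univ 0⟩
              fun k => |klB k| := Finset.le_sup' (fun k : Fin 3 => |klB k|)
              (Finset.mem_univ _)
          have h2 : |ℓv (a j ω) (y j ω)| ≤ |m| + |M| := by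
            rcases hproc.y_range j hj.1 ω with hy | hy <;> rw [hy] <;> rw [abs_le] <;>
              constructor
            · have := hm0 (a j ω); have := neg_abs_le m
              have := abs_nonneg M; linarith
            · have := hM0 (a j ω); have := le_abs_self M
              have := abs_nonneg m; linarith
            · have := hm1 (a j ω); have := neg_abs_le m
              have := abs_nonneg M; linarith
            · have := hM1 (a j ω); have := le_abs_self M
              have := abs_nonneg m; linarith
          have h3 : |ε| ≤ 1 := by rcases hεcases with h | h <;> rw [h] <;> norm_num
          calc |klB (a j ω) - ε * ℓv (a j ω) (y j ω)|
              ≤ |klB (a j ω)| + |ε * ℓv (a j ω) (y j ω)| := abs_sub _ _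
            _ = |klB (a j ω)| + |ε| * |ℓv (a j ω) (y j ω)| := by rw [abs_mul]
            _ ≤ CB := by
                rw [hCB]
                nlinarith [abs_nonneg (ℓv (a j ω) (y j ω)), abs_nonneg (klB (a j ω)),
                  abs_nonneg ε, abs_nonneg m, abs_nonneg M]
      _ = t * CB := by rw [Finset.sum_const, Nat.card_Icc]; simp [mul_comm]
  have hWint : ∀ t, Integrable (fun ω => exp (lam * W t ω)) μ := by
    intro t
    refine integrable_of_bdd (C := exp (|lam| * (t * CB)))
      (((hWm t).const_mul lam).exp.aestronglyMeasurable) (fun ω => ?_)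
    rw [abs_of_pos (exp_pos _), exp_le_exp]
    calc lam * W t ω ≤ |lam * W t ω| := le_abs_self _
      _ = |lam| * |W t ω| := abs_mul _ _
      _ ≤ |lam| * (t * CB) := mul_le_mul_of_nonneg_left (hWbdd t ω) (abs_nonneg _)
  -- Chernoff bound
  have hchern : ∀ t : ℕ, 1 ≤ t → (μ {ω | aa * t ≤ W t ω}).toReal ≤ rr ^ t := by
    intro t ht
    have hsub : {ω | aa * t ≤ W t ω} ⊆ {ω | exp (lam * (aa * t)) ≤ exp (lam * W t ω)} := by
      intro ω hω
      rw [Set.mem_setOf_eq] at hω ⊢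
      rw [exp_le_exp]
      exact mul_le_mul_of_nonneg_left hω hlampos.le
    have hmark := mul_meas_ge_le_integral_of_nonneg
      (f := fun ω => exp (lam * W t ω)) (μ := μ)
      (ae_of_all _ fun ω => (exp_pos _).le) (hWint t) (exp (lam * (aa * t)))
    have hmono : (μ {ω | aa * t ≤ W t ω}).toReal
        ≤ (μ {ω | exp (lam * (aa * t)) ≤ exp (lam * W t ω)}).toReal :=
      ENNReal.toReal_mono (measure_ne_top _ _) (measure_mono hsub)
    have hKt : (∫ ω, exp (lam * W t ω) ∂μ) ≤ exp (lam ^ 2 * (M - m) ^ 2 / 8) ^ t := hmgf t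
    have hεpos : (0:ℝ) < exp (lam * (aa * t)) := exp_pos _
    have key : (μ {ω | exp (lam * (aa * t)) ≤ exp (lam * W t ω)}).toReal
        ≤ exp (lam ^ 2 * (M - m) ^ 2 / 8) ^ t / exp (lam * (aa * t)) := by
      rw [le_div_iff₀ hεpos, mul_comm]
      exact hmark.trans hKt
    refine (hmono.trans key).trans_eq ?_
    rw [hrr, ← Real.exp_nat_mul, ← Real.exp_nat_mul, ← Real.exp_sub]
    congr 1
    rw [hlam, hcc]
    field_simp
    ring
  -- wrong action forces the walk to be large
  have hwrong : ∀ t, 1 ≤ t → ∀ ω, a (t + 1) ω ≠ i.castSucc →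
      ε * LLR3 q a y t ω ≤ η := by
    intro t ht ω hne'
    have hp := hpol t ht ω
    rcases hi2 i with h | h <;> subst h
    · rw [hεdef, hη, if_pos rfl, if_pos rfl]
      have hnlt : ¬(LLR3 q a y t ω < -η₀) := by
        intro hlt
        apply hne'
        rw [hp, if_pos hlt]
        decide
      rw [not_lt] at hnlt
      linarith
    · rw [hεdef, hη, if_neg (by decide), if_neg (by decide)]
      by_cases h1 : LLR3 q a y t ω < -η₀
      · linarith
      · by_cases h2 : LLR3 q a y t ω ≤ η₁
        · linarith
        · exfalso
          apply hne'
          rw [hp, if_neg h1, if_neg h2]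
          decide
  have hWge : ∀ t, 1 ≤ t → ∀ ω, a (t + 1) ω ≠ i.castSucc → aa * t ≤ W t ω := by
    intro t ht ω hne'
    have h1 : ε * LLR3 q a y t ω ≤ η := hwrong t ht ω hne'
    have hLLR : LLR3 q a y t ω = ∑ j ∈ Finset.Icc 1 t, ℓv (a j ω) (y j ω) := rfl
    have hWeq : W t ω = (∑ j ∈ Finset.Icc 1 t, klB (a j ω))
        - ε * ∑ j ∈ Finset.Icc 1 t, ℓv (a j ω) (y j ω) := by
      simp only [hW]
      rw [Finset.sum_sub_distrib, Finset.mul_sum]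
    have h2 : (t : ℝ) * κ ≤ ∑ j ∈ Finset.Icc 1 t, klB (a j ω) := by
      have hle : ∀ j ∈ Finset.Icc 1 t, κ ≤ klB (a j ω) := by
        intro j _
        rw [hκ, hklB]
        exact Finset.inf'_le (fun k : Fin 3 => klBern (q i k) (q (1 - i) k))
          (Finset.mem_univ _)
      calc (t : ℝ) * κ = ∑ _j ∈ Finset.Icc 1 t, κ := by
            rw [Finset.sum_const, Nat.card_Icc]; simp [mul_comm]
        _ ≤ _ := Finset.sum_le_sum hle
    have ht1 : (1 : ℝ) ≤ (t : ℝ) := by exact_mod_cast ht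
    rw [hWeq, ← hLLR, haa']
    have hx : 0 ≤ (↑t - 1) * η := mul_nonneg (sub_nonneg.mpr ht1) hηnn
    have hx2 : (κ - η) * ↑t = ↑t * κ - η - (↑t - 1) * η := by ring
    rw [hx2]
    linarith
  -- measurability of the wrong-action events
  have hSmeas : ∀ t, 1 ≤ t → MeasurableSet {ω | a t ω ≠ i.castSucc} := fun t ht =>
    (ham t ht) ((measurableSet_singleton i.castSucc).compl)
  have hind_int : ∀ t, 1 ≤ t →
      Integrable (fun ω => if a t ω ≠ i.castSucc then (1:ℝ) else 0) μ := by
    intro t ht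
    refine integrable_of_bdd (C := 1)
      (((measurable_of_countable
        (fun k : Fin 3 => if k ≠ i.castSucc then (1:ℝ) else 0)).comp
        (ham t ht)).aestronglyMeasurable) (fun ω => ?_)
    split <;> norm_num
  have hterm : ∀ t, 1 ≤ t →
      (∫ ω, (if a t ω ≠ i.castSucc then (1:ℝ) else 0) ∂μ)
        = (μ {ω | a t ω ≠ i.castSucc}).toReal := by
    intro t ht
    have heq : (fun ω => if a t ω ≠ i.castSucc then (1:ℝ) else 0)
        = Set.indicator {ω | a t ω ≠ i.castSucc} (fun _ => (1:ℝ)) := by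
      funext ω
      rw [Set.indicator_apply]
      by_cases h : a t ω ≠ i.castSucc <;> simp [h]
    rw [heq, integral_indicator_const (1:ℝ) (hSmeas t ht)]
    simp [Measure.real]
  have hcardeq : ∀ T : ℕ, ∀ ω,
      (((Finset.Icc 1 T).filter (fun t => a t ω ≠ i.castSucc)).card : ℝ)
        = ∑ t ∈ Finset.Icc 1 T, (if a t ω ≠ i.castSucc then (1:ℝ) else 0) := by
    intro T ω
    rw [Finset.card_filter]
    push_cast
    apply Finset.sum_congr rfl
    intro t _
    split <;> simp
  have hcount_int : ∀ T : ℕ, Integrable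
      (fun ω => (((Finset.Icc 1 T).filter (fun t => a t ω ≠ i.castSucc)).card : ℝ)) μ := by
    intro T
    refine (integrable_finset_sum (f := fun t ω => if a t ω ≠ i.castSucc then (1:ℝ) else 0)
      (Finset.Icc 1 T) (fun t ht => hind_int t (Finset.mem_Icc.mp ht).1)).congr
      (ae_of_all _ fun ω => (hcardeq T ω).symm)
  have hEeq : ∀ T : ℕ,
      (∫ ω, (((Finset.Icc 1 T).filter (fun t => a t ω ≠ i.castSucc)).card : ℝ) ∂μ)
        = ∑ t ∈ Finset.Icc 1 T, (μ {ω | a t ω ≠ i.castSucc}).toReal := by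
    intro T
    rw [integral_congr_ae (ae_of_all _ (hcardeq T)),
      integral_finset_sum _ (fun t ht => hind_int t (Finset.mem_Icc.mp ht).1)]
    exact Finset.sum_congr rfl fun t ht => hterm t (Finset.mem_Icc.mp ht).1
  -- summing up
  have hcc1 : rr * cc ≤ 1 - rr := by
    have hx1 : rr * (cc + 1) ≤ rr * exp cc :=
      mul_le_mul_of_nonneg_left (add_one_le_exp cc) hrr0.le
    have hx2 : rr * exp cc = 1 := by rw [hrr, ← exp_add]; simp
    rw [hx2] at hx1
    have hx3 : rr * (cc + 1) = rr * cc + rr := by ring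
    rw [hx3] at hx1
    linarith
  have hfrac : rr / (1 - rr) ≤ (M - m) ^ 2 / (2 * aa ^ 2) := by
    have h1 : rr / (1 - rr) ≤ 1 / cc := by
      rw [div_le_div_iff₀ (by linarith) hccpos]
      rw [mul_comm] at hcc1 ⊢
      linarith
    have h2 : 1 / cc = (M - m) ^ 2 / (2 * aa ^ 2) := by
      rw [hcc]
      rw [one_div_div]
    linarith
  have hbullet2 : ∀ T : ℕ, 1 ≤ T →
      (∫ ω, (((Finset.Icc 1 T).filter (fun t => a t ω ≠ i.castSucc)).card : ℝ) ∂μ)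
        ≤ 1 + (M - m) ^ 2 / (2 * aa ^ 2) := by
    intro T hT
    rw [hEeq T]
    have hsplit : Finset.Icc 1 T = insert 1 (Finset.Icc 2 T) := by
      ext x
      simp only [Finset.mem_Icc, Finset.mem_insert]
      omega
    rw [hsplit, Finset.sum_insert (by simp)]
    have h1 : (μ {ω | a 1 ω ≠ i.castSucc}).toReal ≤ 1 := by
      calc (μ {ω | a 1 ω ≠ i.castSucc}).toReal ≤ (1 : ENNReal).toReal :=
            ENNReal.toReal_mono ENNReal.one_ne_top prob_le_one
        _ = 1 := ENNReal.toReal_one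
    have h2 : ∑ t ∈ Finset.Icc 2 T, (μ {ω | a t ω ≠ i.castSucc}).toReal
        ≤ (M - m) ^ 2 / (2 * aa ^ 2) := by
      have step1 : ∑ t ∈ Finset.Icc 2 T, (μ {ω | a t ω ≠ i.castSucc}).toReal
          ≤ ∑ t ∈ Finset.Icc 2 T, rr ^ (t - 1) := by
        apply Finset.sum_le_sum
        intro t ht
        have ht2 := Finset.mem_Icc.mp ht
        have ht1 : 1 ≤ t - 1 := by omega
        have he : t - 1 + 1 = t := by omega
        have hsubset : {ω | a t ω ≠ i.castSucc} ⊆ {ω | aa * ↑(t-1) ≤ W (t-1) ω} := by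
          intro ω hω
          rw [Set.mem_setOf_eq] at hω ⊢
          exact hWge (t-1) ht1 ω (by rw [he]; exact hω)
        exact (ENNReal.toReal_mono (measure_ne_top _ _) (measure_mono hsubset)).trans
          (hchern (t-1) ht1)
      have hmap : Finset.Icc 2 T
          = Finset.map ⟨fun s => s + 1, add_left_injective 1⟩ (Finset.Icc 1 (T-1)) := by
        ext x
        simp only [Finset.mem_Icc, Finset.mem_map, Function.Embedding.coeFn_mk]
        constructor
        · intro hx; exact ⟨x - 1, by omega, by omega⟩
        · rintro ⟨s, hs, rfl⟩; omega
      have step2 : ∑ t ∈ Finset.Icc 2 T, rr ^ (t - 1)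
          = ∑ s ∈ Finset.Icc 1 (T-1), rr ^ s := by
        rw [hmap, Finset.sum_map]
        simp only [Function.Embedding.coeFn_mk, Nat.add_sub_cancel]
      calc ∑ t ∈ Finset.Icc 2 T, (μ {ω | a t ω ≠ i.castSucc}).toReal
          ≤ ∑ t ∈ Finset.Icc 2 T, rr ^ (t - 1) := step1
        _ = ∑ s ∈ Finset.Icc 1 (T-1), rr ^ s := step2
        _ ≤ rr / (1 - rr) := geom_Icc_le hrr0.le hrr1 _
        _ ≤ (M - m) ^ 2 / (2 * aa ^ 2) := hfrac
    linarith
  -- regret bound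
  set G : ℝ := Finset.univ.sup' ⟨0, Finset.mem_univ 0⟩
      (fun k : Fin 3 => r i i.castSucc - r i k) with hG
  have hGk : ∀ k, r i i.castSucc - r i k ≤ G := fun k => by
    rw [hG]
    exact Finset.le_sup' (fun k : Fin 3 => r i i.castSucc - r i k) (Finset.mem_univ k)
  have hG0 : 0 ≤ G := by
    have := hGk i.castSucc
    linarith
  refine ⟨haapos, hbullet2, G * (1 + (M - m) ^ 2 / (2 * aa ^ 2)), ?_⟩
  intro T hT
  have hrev_int : Integrable (fun ω => ∑ t ∈ Finset.Icc 1 T, r i (a t ω)) μ := by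
    apply integrable_finset_sum
    intro t ht
    exact integrable_of_bdd
      (C := Finset.univ.sup' ⟨0, Finset.mem_univ 0⟩ (fun k : Fin 3 => |r i k|))
      (((measurable_of_countable (fun k => r i k)).comp
        (ham t (Finset.mem_Icc.mp ht).1)).aestronglyMeasurable)
      (fun ω => Finset.le_sup' (fun k : Fin 3 => |r i k|) (Finset.mem_univ _))
  have heq1 : (T : ℝ) * r i i.castSucc - ∫ ω, ∑ t ∈ Finset.Icc 1 T, r i (a t ω) ∂μ
      = ∫ ω, ((T : ℝ) * r i i.castSucc - ∑ t ∈ Finset.Icc 1 T, r i (a t ω)) ∂μ := by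
    rw [integral_sub (integrable_const _) hrev_int, integral_const]
    simp
  rw [heq1]
  have hptwise : ∀ ω, (T : ℝ) * r i i.castSucc - ∑ t ∈ Finset.Icc 1 T, r i (a t ω)
      ≤ G * (((Finset.Icc 1 T).filter (fun t => a t ω ≠ i.castSucc)).card : ℝ) := by
    intro ω
    have e1 : ∑ t ∈ Finset.Icc 1 T, (r i i.castSucc - r i (a t ω))
        = (T : ℝ) * r i i.castSucc - ∑ t ∈ Finset.Icc 1 T, r i (a t ω) := by
      rw [Finset.sum_sub_distrib, Finset.sum_const, Nat.card_Icc]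
      simp [nsmul_eq_mul]
    rw [← e1, hcardeq T ω, Finset.mul_sum]
    apply Finset.sum_le_sum
    intro t _
    by_cases h : a t ω ≠ i.castSucc
    · rw [if_pos h, mul_one]
      exact hGk _
    · rw [if_neg h, mul_zero]
      push_neg at h
      rw [h, sub_self]
  calc (∫ ω, ((T : ℝ) * r i i.castSucc - ∑ t ∈ Finset.Icc 1 T, r i (a t ω)) ∂μ)
      ≤ ∫ ω, G * (((Finset.Icc 1 T).filter (fun t => a t ω ≠ i.castSucc)).card : ℝ) ∂μ := by
        apply integral_mono_ae ((integrable_const _).sub hrev_int)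
          ((hcount_int T).const_mul G) (ae_of_all _ hptwise)
    _ = G * ∫ ω, (((Finset.Icc 1 T).filter (fun t => a t ω ≠ i.castSucc)).card : ℝ) ∂μ :=
        integral_const_mul G _
    _ ≤ G * (1 + (M - m) ^ 2 / (2 * aa ^ 2)) :=
        mul_le_mul_of_nonneg_left (hbullet2 T hT) hG0
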